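/- Let S be a finite set and for each u ∈ S let α_u ∈ [0,1) and β_u = x_u/(1-α_u) where x_u ≥ 0 and α_u + x_u ≤ 1 (so β_u ∈ [0,1]). Suppose events E_u (u ∈ S) satisfy P(E^X) ≤ ∏_{u∈X} α_u for all X ⊆ S. Then ∑_{Y ⊆ S} P(E^{S\Y}) · (∏_{u∈Y} β_u) · ∏_{u∈S\Y} (1 - β_u) ≤ ∏_{u∈S} (α_u + x_u). -/
import Mathlib


open MeasureTheory Finset

theorem stmt_7 {Ω ι : Type*} [MeasurableSpace Ω] [DecidableEq ι] (μ : Measure Ω)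
    [IsProbabilityMeasure μ] (S : Finset ι) (E : ι → Set Ω) (α x β : ι → ℝ)
    (hα0 : ∀ u ∈ S, 0 ≤ α u) (hα1 : ∀ u ∈ S, α u < 1)
    (hx0 : ∀ u ∈ S, 0 ≤ x u) (hax : ∀ u ∈ S, α u + x u ≤ 1)
    (hβ : ∀ u ∈ S, β u = x u / (1 - α u))
    (hP : ∀ X ∈ S.powerset, (μ (⋂ u ∈ X, E u)).toReal ≤ ∏ u ∈ X, α u) :
    ∑ Y ∈ S.powerset,
        (μ (⋂ u ∈ S \ Y, E u)).toReal * (∏ u ∈ Y, β u) * ∏ u ∈ S \ Y, (1 - β u)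
      ≤ ∏ u ∈ S, (α u + x u) := by
  have hβ0 : ∀ u ∈ S, 0 ≤ β u := fun u hu => by
    rw [hβ u hu]
    exact div_nonneg (hx0 u hu) (by linarith [hα1 u hu])
  have hβ1 : ∀ u ∈ S, β u ≤ 1 := fun u hu => by
    rw [hβ u hu]
    rw [div_le_one (by linarith [hα1 u hu])]
    linarith [hax u hu]
  have key : ∀ u ∈ S, α u + x u = β u + α u * (1 - β u) := by
    intro u hu
    have h1 : (0:ℝ) < 1 - α u := by linarith [hα1 u hu]
    rw [hβ u hu]
    field_simp
    ring
  rw [Finset.prod_congr rfl key, Finset.prod_add]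
  apply Finset.sum_le_sum
  intro Y hY
  have hYS : Y ⊆ S := Finset.mem_powerset.mp hY
  have hsub : S \ Y ∈ S.powerset := Finset.mem_powerset.mpr Finset.sdiff_subset
  have hβprod : 0 ≤ ∏ u ∈ Y, β u := Finset.prod_nonneg fun u hu => hβ0 u (hYS hu)
  have h1βprod : 0 ≤ ∏ u ∈ S \ Y, (1 - β u) := Finset.prod_nonneg fun u hu => by
    have := hβ1 u (Finset.mem_sdiff.mp hu).1; linarith
  calc (μ (⋂ u ∈ S \ Y, E u)).toReal * (∏ u ∈ Y, β u) * ∏ u ∈ S \ Y, (1 - β u)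
      ≤ (∏ u ∈ S \ Y, α u) * (∏ u ∈ Y, β u) * ∏ u ∈ S \ Y, (1 - β u) := by
        exact mul_le_mul_of_nonneg_right
          (mul_le_mul_of_nonneg_right (hP _ hsub) hβprod) h1βprod
    _ = (∏ u ∈ Y, β u) * ∏ u ∈ S \ Y, (α u * (1 - β u)) := by
        rw [Finset.prod_mul_distrib]; ring
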